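/- Abstract version of Lemma 3 (fixed points meet image of σ−1): Let p be a prime, σ a generator of a cyclic group H of order p, M an 𝔽_p[H]-module, A an 𝔽_p-vector space, and c: M → A, r: A → M 𝔽_p-linear maps with: (i) r ∘ c = (σ−1)^{p−1} as endomorphisms of M; (ii) c is surjective; (iii) ker c = (σ−1)M; (iv) c commutes with σ in the sense c(σm)=c(m); (v) ker r = c(M^H) (the image under c of the H-fixed points equals the kernel of r, and c restricted to a suitable trivial submodule X ⊆ M^H is a bijection onto ker r). Then M^H ∩ (σ−1)M = (σ−1)^{p−1}M. -/

import Mathlib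

/-- The group algebra `𝔽_p[H]` for `H` the cyclic group of order `p`, generated by `σ`. -/
abbrev Sp (p : ℕ) : Type := MonoidAlgebra (ZMod p) (Multiplicative (ZMod p))

/-- The generator `σ` of the cyclic group `H`, as an element of the group algebra. -/
noncomputable def sigma (p : ℕ) : Sp p :=
  MonoidAlgebra.of (ZMod p) (Multiplicative (ZMod p)) (Multiplicative.ofAdd 1)

/-- Scalar multiplication by `s ∈ 𝔽_p[H]` as an `𝔽_p`-linear endomorphism. -/
noncomputable def smulMap (p : ℕ) (M : Type*) [AddCommGroup M] [Module (Sp p) M]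
    [Module (ZMod p) M] [IsScalarTower (ZMod p) (Sp p) M] (s : Sp p) :
    M →ₗ[ZMod p] M :=
  (LinearMap.lsmul (Sp p) M s).restrictScalars (ZMod p)

lemma charSp (p : ℕ) [Fact p.Prime] : CharP (Sp p) p :=
  charP_of_injective_algebraMap (R := ZMod p)
    (fun a b h => by
      simpa [MonoidAlgebra.coe_algebraMap, Function.comp] using congrArg (fun f : Sp p => f.coeff 1) h) p

lemma tau_pow_p (p : ℕ) [Fact p.Prime] : (sigma p - 1) ^ p = 0 := by
  haveI := charSp p
  have h1 : (sigma p) ^ p = 1 := by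
    unfold sigma
    rw [← map_pow, ← ofAdd_nsmul]
    simp [ZMod.natCast_self, ← MonoidAlgebra.one_def]
  rw [sub_pow_char, h1, one_pow, sub_self]

/-- Abstract version of Lemma 3: under the hypotheses on `c = cor` and `r = res`,
the fixed points meet the image of `σ-1` exactly in the image of `(σ-1)^(p-1)`:
`M^H ∩ (σ-1)M = (σ-1)^(p-1)M`. -/
theorem stmt14 (p : ℕ) [Fact p.Prime]
    (M A : Type*) [AddCommGroup M] [Module (Sp p) M]
    [Module (ZMod p) M] [IsScalarTower (ZMod p) (Sp p) M]
    [AddCommGroup A] [Module (ZMod p) A]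
    (c : M →ₗ[ZMod p] A) (r : A →ₗ[ZMod p] M)
    (hrc : ∀ m : M, r (c m) = (sigma p - 1) ^ (p - 1) • m)
    (hsurj : Function.Surjective c)
    (hker : LinearMap.ker c = LinearMap.range (smulMap p M (sigma p - 1)))
    (hcomm : ∀ m : M, c (sigma p • m) = c m)
    (hfix : Submodule.map c (LinearMap.ker (smulMap p M (sigma p - 1))) = LinearMap.ker r)
    (hX : ∃ X : Submodule (ZMod p) M, (∀ x ∈ X, sigma p • x = x) ∧
      Set.BijOn c X (LinearMap.ker r)) :
    LinearMap.ker (smulMap p M (sigma p - 1)) ⊓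
        LinearMap.range (smulMap p M (sigma p - 1)) =
      LinearMap.range (smulMap p M ((sigma p - 1) ^ (p - 1))) := by
  obtain ⟨X, hXfix, hXbij⟩ := hX
  have hp2 : 2 ≤ p := (Fact.out : p.Prime).two_le
  set τ : Sp p := sigma p - 1 with hτ
  have hτp : τ ^ p = 0 := tau_pow_p p
  have hsm : ∀ (s : Sp p) (m : M), smulMap p M s m = s • m := fun s m => rfl
  -- elements of X are killed by τ
  have hXτ : ∀ x ∈ X, τ • x = 0 := by
    intro x hx
    have := hXfix x hx
    rw [hτ, sub_smul, one_smul, this, sub_self]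
  -- main induction
  have key : ∀ d : ℕ, d ≤ p - 2 → ∀ m : M, τ • m = 0 →
      (∃ w : M, τ ^ (p - 1 - d) • w = m) → ∃ w : M, τ ^ (p - 1) • w = m := by
    intro d
    induction d with
    | zero => intro _ m _ hw; simpa using hw
    | succ d ih =>
      intro hd m hm ⟨w, hw⟩
      set j := p - 1 - (d + 1) with hj
      have hj1 : 1 ≤ j := by omega
      have hjp : j + 1 ≤ p - 1 := by omega
      -- τ^(j+1) • w = 0
      have h1 : τ ^ (j + 1) • w = 0 := by
        have : τ ^ (j + 1) • w = τ • (τ ^ j • w) := by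
          rw [smul_smul, ← pow_succ']
        rw [this, hw, hm]
      -- τ^(p-1) • w = 0
      have h2 : τ ^ (p - 1) • w = 0 := by
        have hdecomp : τ ^ (p - 1) = τ ^ (p - 1 - (j + 1)) * τ ^ (j + 1) := by
          rw [← pow_add]; congr 1; omega
        rw [hdecomp, mul_smul, h1, smul_zero]
      -- c w ∈ ker r
      have h3 : c w ∈ LinearMap.ker r := by
        rw [LinearMap.mem_ker, hrc]; exact h2
      obtain ⟨x, hxX, hcx⟩ := hXbij.2.2 h3
      -- w - x ∈ ker c = range τ
      have h4 : w - x ∈ LinearMap.ker c := by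
        rw [LinearMap.mem_ker, map_sub, hcx, sub_self]
      rw [hker] at h4
      obtain ⟨v, hv⟩ := h4
      rw [hsm] at hv
      -- m = τ^(j+1) • v
      have h5 : τ ^ (j + 1) • v = m := by
        have hx0 : τ ^ j • x = 0 := by
          have : τ ^ j = τ ^ (j - 1) * τ := by
            rw [← pow_succ]; congr 1; omega
          rw [this, mul_smul, hXτ x hxX, smul_zero]
        calc τ ^ (j + 1) • v = τ ^ j • (τ • v) := by rw [smul_smul, ← pow_succ]
          _ = τ ^ j • (w - x) := by rw [hv]
          _ = τ ^ j • w - τ ^ j • x := by rw [smul_sub]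
          _ = m := by rw [hx0, sub_zero, hw]
      exact ih (by omega) m hm ⟨v, by rw [show p - 1 - d = j + 1 by omega]; exact h5⟩
  ext m
  simp only [Submodule.mem_inf, LinearMap.mem_ker, LinearMap.mem_range, hsm]
  constructor
  · rintro ⟨hm, n, hn⟩
    have hm' : τ • m = 0 := hm
    obtain ⟨w, hw⟩ := key (p - 2) le_rfl m hm'
      ⟨n, by rw [show p - 1 - (p - 2) = 1 by omega, pow_one]; exact hn⟩
    exact ⟨w, hw⟩
  · rintro ⟨w, hw⟩
    constructor
    · rw [← hw, smul_smul, ← pow_succ', show p - 1 + 1 = p by omega, hτp, zero_smul]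
    · refine ⟨τ ^ (p - 2) • w, ?_⟩
      rw [smul_smul, ← pow_succ', show p - 2 + 1 = p - 1 by omega, hw]
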